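/- There exists a unique continuous K-linear map d : K{{x}} → K{{x,y} (with respect to the x-adic topologies) such that d(x) = y and d(•_m(f_1,…,f_m)) = Σ_{i=1}^m •_m(f_1,…,f_{i−1}, d(f_i), f_{i+1},…,f_m) for all m ≥ 2 and all f_1,…,f_m ∈ K{{x}}. This d is called the universal derivation on K{{x}}, and d(f) = df is the differential of f; in particular y = dx. -/

import Mathlib

namespace Planar

inductive PVar : Type
  | vx : PVar
  | vy : PVar
deriving DecidableEq

/-- A finite planar reduced rooted tree: every internal vertex has at least two
(ordered) children, encoded as `node t₁ t₂ rest` with children list `t₁ :: t₂ :: rest`;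
leaves are labeled by a variable (an isomorphism class of such a labeled tree is
faithfully represented by this inductive data). -/
inductive PTree : Type
  | leaf : PVar → PTree
  | node : PTree → PTree → List PTree → PTree

namespace PTree

/-- The number of leaves carrying the label `v`. -/
def countLeaf (v : PVar) : PTree → ℕ
  | .leaf w => if w = v then 1 else 0
  | .node t1 t2 rest =>
      countLeaf v t1 + countLeaf v t2 + (rest.attach.map fun t => countLeaf v t.1).sum
decreasing_by
  all_goals simp_wf
  · omega
  · omega
  · have := List.sizeOf_lt_of_mem t.2
    omega

end PTree

/-- `P'(x,y)`: planar monomials plus the empty tree `1_P` (= `none`). -/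
abbrev PT := Option PTree

/-- `deg_x`: the number of leaves labeled `x`. -/
def degx (S : PT) : ℕ := S.elim 0 (PTree.countLeaf .vx)

/-- `deg_y`: the number of leaves labeled `y`. -/
def degy (S : PT) : ℕ := S.elim 0 (PTree.countLeaf .vy)

/-- `m`-ary grafting `•_m` on `P'(x,y)` (`m = l.length`): join the non-trivial entries
at a new root; the conventions `•_m(1_P,…,1_P) = 1_P`, dropping of `1_P`-entries and
`•_2(S,1_P) = •_2(1_P,S) = S` amount to discarding the `1_P`-entries first. -/
def graft (l : List PT) : PT :=
  match l.reduceOption with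
  | [] => none
  | [t] => some t
  | t1 :: t2 :: ts => some (.node t1 t2 ts)

variable (K : Type) [Field K]

/-- The algebra `K{{x,y}` of planar power series in `x` and polynomials in `y`:
functions on `P'(x,y)` such that for every `n` only finitely many monomials of
`x`-degree `n` have a nonzero coefficient. -/
def PSer : Type := {f : PT → K // ∀ n : ℕ, {S : PT | f S ≠ 0 ∧ degx S = n}.Finite}

variable {K}

namespace PSer

private lemma finite_add (f g : PSer K) (n : ℕ) :
    {S : PT | f.1 S + g.1 S ≠ 0 ∧ degx S = n}.Finite := by
  apply ((f.2 n).union (g.2 n)).subset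
  rintro S ⟨hne, hdeg⟩
  by_cases h1 : f.1 S = 0
  · exact Or.inr ⟨by simpa [h1] using hne, hdeg⟩
  · exact Or.inl ⟨h1, hdeg⟩

private lemma finite_neg (f : PSer K) (n : ℕ) :
    {S : PT | -f.1 S ≠ 0 ∧ degx S = n}.Finite := by
  apply (f.2 n).subset
  rintro S ⟨hne, hdeg⟩
  exact ⟨by simpa using hne, hdeg⟩

private lemma finite_zero (n : ℕ) :
    {S : PT | (0 : K) ≠ 0 ∧ degx S = n}.Finite := by
  convert Set.finite_empty using 1
  ext S; simp

private lemma finite_smul (a : K) (f : PSer K) (n : ℕ) :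
    {S : PT | a * f.1 S ≠ 0 ∧ degx S = n}.Finite := by
  apply (f.2 n).subset
  rintro S ⟨hne, hdeg⟩
  exact ⟨fun h => hne (by simp [h]), hdeg⟩

noncomputable instance : AddCommGroup (PSer K) where
  add f g := ⟨fun S => f.1 S + g.1 S, finite_add f g⟩
  zero := ⟨fun _ => 0, finite_zero⟩
  neg f := ⟨fun S => -f.1 S, finite_neg f⟩
  add_assoc f g h := Subtype.ext (funext fun S => add_assoc _ _ _)
  add_comm f g := Subtype.ext (funext fun S => add_comm _ _)
  zero_add f := Subtype.ext (funext fun S => zero_add _)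
  add_zero f := Subtype.ext (funext fun S => add_zero _)
  neg_add_cancel f := Subtype.ext (funext fun S => neg_add_cancel _)
  nsmul n f := ⟨fun S => (n : K) * f.1 S, finite_smul _ f⟩
  nsmul_zero f := Subtype.ext (funext fun S => by
    show ((0 : ℕ) : K) * f.1 S = (0 : K); simp)
  nsmul_succ n f := Subtype.ext (funext fun S => by
    show ((n + 1 : ℕ) : K) * f.1 S = (n : K) * f.1 S + f.1 S; push_cast; ring)
  zsmul n f := ⟨fun S => (n : K) * f.1 S, finite_smul _ f⟩
  zsmul_zero' f := Subtype.ext (funext fun S => by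
    show ((0 : ℤ) : K) * f.1 S = (0 : K); simp)
  zsmul_succ' n f := Subtype.ext (funext fun S => by
    show ((Int.ofNat n.succ : ℤ) : K) * f.1 S = ((Int.ofNat n : ℤ) : K) * f.1 S + f.1 S
    simp only [Int.ofNat_eq_coe]; push_cast; ring)
  zsmul_neg' n f := Subtype.ext (funext fun S => by
    show ((Int.negSucc n : ℤ) : K) * f.1 S = -(((n.succ : ℤ) : K) * f.1 S)
    simp [Int.negSucc_eq]; push_cast; ring)

noncomputable instance : Module K (PSer K) where
  smul a f := ⟨fun S => a * f.1 S, finite_smul a f⟩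
  one_smul f := Subtype.ext (funext fun S => one_mul _)
  mul_smul a b f := Subtype.ext (funext fun S => mul_assoc _ _ _)
  smul_zero a := Subtype.ext (funext fun S => mul_zero _)
  smul_add a f g := Subtype.ext (funext fun S => mul_add _ _ _)
  add_smul a b f := Subtype.ext (funext fun S => add_mul _ _ _)
  zero_smul f := Subtype.ext (funext fun S => zero_mul _)

@[simp] lemma add_coeff (f g : PSer K) (S : PT) : (f + g).1 S = f.1 S + g.1 S := rfl
@[simp] lemma smul_coeff (a : K) (f : PSer K) (S : PT) : (a • f).1 S = a * f.1 S := rfl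
@[simp] lemma zero_coeff (S : PT) : (0 : PSer K).1 S = 0 := rfl

end PSer

open PSer

/-- The indicator series of a single planar monomial `S ∈ P'(x,y)`. -/
noncomputable def mono (S : PT) : PSer K := by
  classical
  refine ⟨fun T => if T = S then 1 else 0, fun n => (Set.finite_singleton S).subset ?_⟩
  rintro T ⟨h1, -⟩
  by_contra hc
  exact h1 (if_neg (by simpa [Set.mem_singleton_iff] using hc))

/-- The unit series `1_P` (the empty tree). -/
noncomputable def onePS : PSer K := mono none

/-- The series `x` (the one-vertex tree labeled `x`). -/
noncomputable def Xps : PSer K := mono (some (.leaf .vx))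

/-- The series `y = dx` (the one-vertex tree labeled `y`). -/
noncomputable def Yps : PSer K := mono (some (.leaf .vy))

/-- Coefficient of the product `•_m(f₁,…,f_m)` at `S`: the (finite) sum of
`c_{S₁}(f₁)⋯c_{S_m}(f_m)` over all decompositions `S = •_m(S₁,…,S_m)`. -/
noncomputable def bulletCoeff (fs : List (PSer K)) (S : PT) : K :=
  ∑ᶠ t ∈ {t : List PT | t.length = fs.length ∧ graft t = S},
    (List.zipWith (fun f u => f.1 u) fs t).prod

open Classical in
/-- The `m`-ary product `•_m(f₁,…,f_m)` on `K{{x,y}` (`m = fs.length`). -/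
noncomputable def bullet (fs : List (PSer K)) : PSer K :=
  if h : ∀ n : ℕ, {S : PT | bulletCoeff fs S ≠ 0 ∧ degx S = n}.Finite
  then ⟨bulletCoeff fs, h⟩ else 0

/-- The `x`-order `ord_x(f) ∈ ℕ ∪ {∞}`: the least `x`-degree of a monomial with
nonzero coefficient (`∞` for `f = 0`). -/
noncomputable def ordx (f : PSer K) : ℕ∞ :=
  ⨅ S ∈ {S : PT | f.1 S ≠ 0}, (degx S : ℕ∞)

/-- The `x`-adic absolute value `|f|ₓ = (1/2)^{ord_x f}` (`= 0` for `f = 0`). -/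
noncomputable def normx (f : PSer K) : ℝ :=
  if ordx f = ⊤ then 0 else (2⁻¹ : ℝ) ^ (ordx f).toNat

/-- The `x`-adic distance `|f - g|ₓ`. -/
noncomputable def distx (f g : PSer K) : ℝ := normx (f - g)

/-- A Cauchy sequence for the `x`-adic distance. -/
def IsCauchySeq (u : ℕ → PSer K) : Prop :=
  ∀ ε : ℝ, 0 < ε → ∃ N : ℕ, ∀ p q : ℕ, N ≤ p → N ≤ q → distx (u p) (u q) < ε

/-- Convergence of a sequence to `f` for the `x`-adic distance. -/
def TendstoSeq (u : ℕ → PSer K) (f : PSer K) : Prop :=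
  ∀ ε : ℝ, 0 < ε → ∃ N : ℕ, ∀ p : ℕ, N ≤ p → distx (u p) f < ε

/-- Continuity of a map between two spaces equipped with distance functions. -/
def ContWrt {α β : Type*} (dα : α → α → ℝ) (dβ : β → β → ℝ) (φ : α → β) : Prop :=
  ∀ a : α, ∀ ε : ℝ, 0 < ε → ∃ δ : ℝ, 0 < δ ∧ ∀ b : α, dα b a < δ → dβ (φ b) (φ a) < ε

/-- The property of being supported on monomials all of whose leaves are labeled `x`. -/
def OnlyX (f : PSer K) : Prop := ∀ S : PT, f.1 S ≠ 0 → degy S = 0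

variable (K) in
/-- `K{{x}}`, the closed unital subalgebra of `K{{x,y}` generated by `x`, as a
submodule: the series supported on `1_P` and trees all of whose leaves are labeled `x`. -/
noncomputable def kxSub : Submodule K (PSer K) where
  carrier := {f | OnlyX f}
  add_mem' := by
    intro f g hf hg S hS
    by_cases h1 : f.1 S = 0
    · exact hg S (by simpa [h1] using hS)
    · exact hf S h1
  zero_mem' := by intro S hS; simp at hS
  smul_mem' := by
    intro a f hf S hS
    exact hf S (fun h => hS (by simp [h]))

variable (K) in
/-- The space `K{{x}}` of planar power series in `x`. -/
abbrev Kx : Type _ := ↥(kxSub K)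

@[simp] lemma mem_kxSub {f : PSer K} : f ∈ kxSub K ↔ OnlyX f := Iff.rfl

/-- The `x`-adic distance on `K{{x}}`. -/
noncomputable def distKx (f g : Kx K) : ℝ := distx f.1 g.1

lemma onePS_mem_kxSub : onePS ∈ kxSub (K := K) := by
  intro S hS
  by_cases h : S = none
  · subst h; rfl
  · exact absurd (if_neg h) hS

lemma Xps_mem_kxSub : Xps ∈ kxSub (K := K) := by
  intro S hS
  by_cases h : S = some (.leaf .vx)
  · subst h; simp [degy, PTree.countLeaf]
  · exact absurd (if_neg h) hS

/-- `1_P` as an element of `K{{x}}`. -/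
noncomputable def oneX : Kx K := ⟨onePS, onePS_mem_kxSub⟩

/-- `x` as an element of `K{{x}}`. -/
noncomputable def xX : Kx K := ⟨Xps, Xps_mem_kxSub⟩

open Classical in
/-- The `m`-ary product `•_m` on `K{{x}}` (`m = fs.length`). -/
noncomputable def bulletX (fs : List (Kx K)) : Kx K :=
  if h : bullet (fs.map (fun f => f.1)) ∈ kxSub K
  then ⟨bullet (fs.map (fun f => f.1)), h⟩ else 0

open Classical in
/-- The homogeneous component of degree `n` (w.r.t. `deg_x`) of a planar power series. -/
noncomputable def comp (f : PSer K) (n : ℕ) : PSer K :=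
  ⟨fun S => if degx S = n then f.1 S else 0, by
    intro m
    apply (f.2 m).subset
    rintro S ⟨h1, h2⟩
    refine ⟨?_, h2⟩
    by_cases hd : degx S = n
    · simpa [hd] using h1
    · simp [hd] at h1⟩

/-- The homogeneous component of degree `n` of an element of `K{{x}}`. -/
noncomputable def compX (f : Kx K) (n : ℕ) : Kx K :=
  ⟨comp f.1 n, by
    intro S hS
    apply (mem_kxSub.mp f.2) S
    simp only [comp] at hS
    by_cases hd : degx S = n
    · simpa [hd] using hS
    · simp [hd] at hS⟩

/-- A substitution homomorphism `φ_{(g,h)} : K{{x,y} → K{{x,y}`: `K`-linear, compatible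
with all grafting operations `•_m` (`m ≥ 2`), unital, `x ↦ g`, `y ↦ h`, and continuous
for the `x`-adic topology. -/
structure IsSubstHom (g h : PSer K) (φ : PSer K → PSer K) : Prop where
  linear : IsLinearMap K φ
  map_graft : ∀ fs : List (PSer K), 2 ≤ fs.length → φ (bullet fs) = bullet (fs.map φ)
  map_one : φ onePS = onePS
  map_X : φ Xps = g
  map_Y : φ Yps = h
  cont : ContWrt distx distx φ

/-- A substitution homomorphism `φ_g : K{{x}} → K{{x}}` with `x ↦ g`. -/
structure IsSubstHomX (g : Kx K) (φ : Kx K → Kx K) : Prop where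
  linear : IsLinearMap K φ
  map_graft : ∀ fs : List (Kx K), 2 ≤ fs.length → φ (bulletX fs) = bulletX (fs.map φ)
  map_one : φ oneX = oneX
  map_X : φ xX = g
  cont : ContWrt distKx distKx φ

/-- The universal derivation `d : K{{x}} → K{{x,y}`: continuous, `K`-linear, `d x = y`,
and satisfying the Leibniz rule for every grafting operation `•_m` (`m ≥ 2`). -/
structure IsUDeriv (d : Kx K → PSer K) : Prop where
  linear : IsLinearMap K d
  cont : ContWrt distKx distx d
  map_X : d xX = Yps
  leibniz : ∀ fs : List (Kx K), 2 ≤ fs.length →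
    d (bulletX fs) = ∑ i : Fin fs.length,
      bullet ((fs.map (fun f => f.1)).set i.1 (d (fs.get i)))

/-- The `k`-ary planar exponential series `Exp_k(x)`: constant coefficient `1`,
coefficient `1` at `x`, and `Exp_k(kx) = •_k(Exp_k(x),…,Exp_k(x))`. -/
structure IsExp (k : ℕ) (f : Kx K) : Prop where
  coeff_one : f.1.1 none = 1
  coeff_X : f.1.1 (some (.leaf .vx)) = 1
  funEq : ∀ φ : Kx K → Kx K, IsSubstHomX ((k : K) • xX) φ →
    φ f = bulletX (List.replicate k f)

/-- `ℓ = Log_k(1+x)`, the planar logarithm attached to a planar exponential series `e`: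
`ord_x ℓ ≥ 1` and `ℓ(e - 1) = x`. -/
structure IsLogOf (e ℓ : Kx K) : Prop where
  ord : 1 ≤ ordx ℓ.1
  eq : ∀ φ : Kx K → Kx K, IsSubstHomX (e - oneX) φ → φ ℓ = xX

end Planar


namespace Planar

variable {K : Type} [Field K]

@[simp] lemma vx_ne_vy : (PVar.vx = PVar.vy) ↔ False := by simp
@[simp] lemma vy_ne_vx : (PVar.vy = PVar.vx) ↔ False := by simp

namespace PTree

@[simp] lemma countLeaf_leaf (v w : PVar) :
    countLeaf v (.leaf w) = if w = v then 1 else 0 := by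
  rw [countLeaf]

@[simp] lemma countLeaf_node (v : PVar) (t1 t2 : PTree) (rest : List PTree) :
    countLeaf v (.node t1 t2 rest) =
      countLeaf v t1 + countLeaf v t2 + (rest.map (countLeaf v)).sum := by
  rw [countLeaf]
  simp

@[elab_as_elim]
lemma strongRecOn {P : PTree → Prop} (hleaf : ∀ v, P (.leaf v))
    (hnode : ∀ t1 t2 rest, P t1 → P t2 → (∀ t ∈ rest, P t) → P (.node t1 t2 rest)) :
    ∀ t, P t
  | .leaf v => hleaf v
  | .node t1 t2 rest =>
      hnode t1 t2 rest (strongRecOn hleaf hnode t1) (strongRecOn hleaf hnode t2)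
        (fun t ht => strongRecOn hleaf hnode t)
decreasing_by
  all_goals simp_wf
  · omega
  · omega
  · have := List.sizeOf_lt_of_mem ht
    omega

/-- Relabel every leaf by `x`. -/
def rel : PTree → PTree
  | .leaf _ => .leaf .vx
  | .node t1 t2 rest => .node (rel t1) (rel t2) (rest.attach.map fun t => rel t.1)
decreasing_by
  all_goals simp_wf
  · omega
  · omega
  · have := List.sizeOf_lt_of_mem t.2
    omega

@[simp] lemma rel_leaf (v : PVar) : rel (.leaf v) = .leaf .vx := by rw [rel]

@[simp] lemma rel_node (t1 t2 : PTree) (rest : List PTree) :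
    rel (.node t1 t2 rest) = .node (rel t1) (rel t2) (rest.map rel) := by
  rw [rel]; simp

lemma list_sum_map_add {α : Type*} (l : List α) (f g : α → ℕ) :
    (l.map fun x => f x + g x).sum = (l.map f).sum + (l.map g).sum := by
  induction l with
  | nil => simp
  | cons a l ih => simp [ih]; omega

lemma county_rel : ∀ t, countLeaf .vy (rel t) = 0 := by
  refine strongRecOn (fun v => by simp) ?_
  intro t1 t2 rest h1 h2 hr
  simp only [rel_node, countLeaf_node, h1, h2, List.map_map]
  simp only [Nat.add_eq, Nat.zero_add, Nat.add_zero, zero_add, add_zero]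
  apply List.sum_eq_zero
  intro x hx
  simp only [List.mem_map, Function.comp] at hx
  obtain ⟨a, ha, rfl⟩ := hx
  exact hr a ha

lemma countx_rel : ∀ t, countLeaf .vx (rel t) = countLeaf .vx t + countLeaf .vy t := by
  refine strongRecOn (fun v => by cases v <;> simp) ?_
  intro t1 t2 rest h1 h2 hr
  simp only [rel_node, countLeaf_node, h1, h2, List.map_map]
  have : (rest.map (countLeaf .vx ∘ rel)).sum
      = (rest.map fun c => countLeaf .vx c + countLeaf .vy c).sum := by
    congr 1
    apply List.map_congr_left
    intro a ha
    exact hr a ha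
  rw [this, list_sum_map_add]
  omega

lemma rel_of_county_eq_zero : ∀ t, countLeaf .vy t = 0 → rel t = t := by
  refine strongRecOn (fun v => ?_) ?_
  · intro hv
    cases v
    · simp
    · simp at hv
  · intro t1 t2 rest h1 h2 hr hzero
    simp only [countLeaf_node] at hzero
    have hz1 : countLeaf .vy t1 = 0 := by omega
    have hz2 : countLeaf .vy t2 = 0 := by omega
    have hzr : (rest.map (countLeaf .vy)).sum = 0 := by omega
    rw [List.sum_eq_zero_iff] at hzr
    simp only [rel_node, h1 hz1, h2 hz2]
    congr 1
    conv_rhs => rw [← List.map_id rest]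
    apply List.map_congr_left
    intro a ha
    exact hr a ha (hzr _ (List.mem_map_of_mem ha))

lemma one_le_leaves : ∀ t, 1 ≤ countLeaf .vx t + countLeaf .vy t := by
  refine strongRecOn (fun v => by cases v <;> simp) ?_
  intro t1 t2 rest h1 h2 _
  simp only [countLeaf_node]
  omega

lemma list_length_le_sum (l : List ℕ) (h : ∀ x ∈ l, 1 ≤ x) : l.length ≤ l.sum := by
  induction l with
  | nil => simp
  | cons a l ih =>
      simp only [List.length_cons, List.sum_cons]
      have := h a (by simp)
      have := ih (fun x hx => h x (by simp [hx]))
      omega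

/-- Lists of bounded length over a finite set form a finite set. -/
lemma finite_bounded_lists {α : Type*} {F : Set α} (hF : F.Finite) (m : ℕ) :
    {l : List α | l.length ≤ m ∧ ∀ x ∈ l, x ∈ F}.Finite := by
  haveI := hF.to_subtype
  have h1 : {l : List F | l.length ≤ m}.Finite := List.finite_length_le _ m
  apply (h1.image (fun l => l.map Subtype.val)).subset
  rintro l ⟨hlen, hmem⟩
  refine ⟨l.attach.map (fun x => (⟨x.1, hmem x.1 x.2⟩ : F)), by simpa using hlen, ?_⟩
  simp [List.map_map]

lemma finite_trees (m : ℕ) :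
    {t : PTree | countLeaf .vx t + countLeaf .vy t ≤ m}.Finite := by
  induction m with
  | zero =>
      have he : {t : PTree | countLeaf .vx t + countLeaf .vy t ≤ 0} = ∅ := by
        ext t
        simp only [Set.mem_setOf_eq, Set.mem_empty_iff_false, iff_false]
        have := one_le_leaves t
        omega
      rw [he]
      exact Set.finite_empty
  | succ m ih =>
      set A := {t : PTree | countLeaf .vx t + countLeaf .vy t ≤ m} with hA
      have hlists : {l : List PTree | l.length ≤ m + 1 ∧ ∀ x ∈ l, x ∈ A}.Finite :=
        finite_bounded_lists ih (m + 1)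
      apply Set.Finite.subset
        (Set.Finite.union
          ((Set.finite_singleton (PTree.leaf .vy)).insert (PTree.leaf .vx))
          (((ih.prod (ih.prod hlists)).image
            (fun p : PTree × PTree × List PTree => PTree.node p.1 p.2.1 p.2.2))))
      intro t ht
      rcases t with v | ⟨t1, t2, rest⟩
      · left; cases v <;> simp
      · right
        simp only [Set.mem_setOf_eq, countLeaf_node] at ht
        have hL1 := one_le_leaves t1
        have hL2 := one_le_leaves t2
        have hmemle : ∀ c ∈ rest, countLeaf .vx c + countLeaf .vy c ≤ m := by
          intro c hc
          have h1 : countLeaf .vx c ≤ (rest.map (countLeaf .vx)).sum :=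
            List.single_le_sum (fun x _ => Nat.zero_le x) _ (List.mem_map_of_mem hc)
          have h2 : countLeaf .vy c ≤ (rest.map (countLeaf .vy)).sum :=
            List.single_le_sum (fun x _ => Nat.zero_le x) _ (List.mem_map_of_mem hc)
          omega
        have hlen : rest.length ≤ m + 1 := by
          have : rest.length ≤ (rest.map fun c => countLeaf .vx c + countLeaf .vy c).sum := by
            have := list_length_le_sum (rest.map fun c => countLeaf .vx c + countLeaf .vy c)
              (by
                intro x hx
                simp only [List.mem_map] at hx
                obtain ⟨a, _, rfl⟩ := hx
                exact one_le_leaves a)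
            simpa using this
          rw [list_sum_map_add] at this
          omega
        refine ⟨⟨t1, t2, rest⟩, ⟨?_, ?_, ?_, ?_⟩, rfl⟩
        · simp only [hA, Set.mem_setOf_eq]; omega
        · simp only [hA, Set.mem_setOf_eq]; omega
        · exact hlen
        · exact hmemle

end PTree

end Planar

namespace Planar

variable {K : Type} [Field K]

open PTree

@[simp] lemma degx_none : degx none = 0 := rfl
@[simp] lemma degx_some (t : PTree) : degx (some t) = countLeaf .vx t := rfl
@[simp] lemma degy_none : degy none = 0 := rfl
@[simp] lemma degy_some (t : PTree) : degy (some t) = countLeaf .vy t := rfl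

lemma graft_of_reduceOption_nil {u : List PT} (h : u.reduceOption = []) :
    graft u = none := by
  unfold graft; rw [h]

lemma graft_of_reduceOption_single {u : List PT} {t : PTree} (h : u.reduceOption = [t]) :
    graft u = some t := by
  unfold graft; rw [h]

lemma graft_of_reduceOption_cons {u : List PT} {t1 t2 : PTree} {ts : List PTree}
    (h : u.reduceOption = t1 :: t2 :: ts) : graft u = some (.node t1 t2 ts) := by
  unfold graft; rw [h]

lemma reduceOption_of_graft_none {u : List PT} (h : graft u = none) :
    u.reduceOption = [] := by
  rcases hr : u.reduceOption with _ | ⟨a, _ | ⟨b, l⟩⟩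
  · rfl
  · rw [graft_of_reduceOption_single hr] at h; exact absurd h (by simp)
  · rw [graft_of_reduceOption_cons hr] at h; exact absurd h (by simp)

lemma reduceOption_of_graft_some {u : List PT} {t : PTree} (h : graft u = some t) :
    u.reduceOption = [t] ∨
      ∃ t1 t2 ts, t = .node t1 t2 ts ∧ u.reduceOption = t1 :: t2 :: ts := by
  rcases hr : u.reduceOption with _ | ⟨a, _ | ⟨b, l⟩⟩
  · rw [graft_of_reduceOption_nil hr] at h; exact absurd h (by simp)
  · rw [graft_of_reduceOption_single hr] at h
    left
    injection h with h
    rw [h]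
  · rw [graft_of_reduceOption_cons hr] at h
    injection h with h
    subst h
    exact Or.inr ⟨a, b, l, rfl, rfl⟩


lemma graft_map_rel (u : List PT) :
    graft (u.map (Option.map rel)) = Option.map rel (graft u) := by
  rcases hr : u.reduceOption with _ | ⟨a, _ | ⟨b, l⟩⟩
  · rw [graft_of_reduceOption_nil hr,
      graft_of_reduceOption_nil (by rw [List.reduceOption_map, hr]; rfl)]
    rfl
  · rw [graft_of_reduceOption_single hr,
      graft_of_reduceOption_single (t := rel a) (by rw [List.reduceOption_map, hr]; rfl)]
    rfl
  · rw [graft_of_reduceOption_cons hr,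
      graft_of_reduceOption_cons (by rw [List.reduceOption_map, hr]; rfl)]
    simp

lemma count_sum_reduceOption (v : PVar) (u : List PT) :
    (u.map fun S => S.elim 0 (countLeaf v)).sum = (u.reduceOption.map (countLeaf v)).sum := by
  induction u with
  | nil => simp
  | cons a l ih => rcases a with _ | t <;> simp [ih]

lemma count_graft (v : PVar) (u : List PT) :
    (graft u).elim 0 (countLeaf v) = (u.map fun S => S.elim 0 (countLeaf v)).sum := by
  rw [count_sum_reduceOption]
  rcases hr : u.reduceOption with _ | ⟨a, _ | ⟨b, l⟩⟩
  · rw [graft_of_reduceOption_nil hr]; rfl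
  · rw [graft_of_reduceOption_single hr]; simp
  · rw [graft_of_reduceOption_cons hr]; simp; omega

lemma degx_graft (u : List PT) : degx (graft u) = (u.map degx).sum := count_graft .vx u

lemma degy_graft (u : List PT) : degy (graft u) = (u.map degy).sum := count_graft .vy u

lemma reduceOption_nil_iff (l : List PT) : l.reduceOption = [] ↔ ∀ x ∈ l, x = none := by
  induction l with
  | nil => simp
  | cons a l ih =>
      rcases a with _ | s
      · simpa using ih
      · simp

lemma reduceOption_map_some (l : List PTree) : (l.map some).reduceOption = l := by
  induction l with
  | nil => rfl
  | cons a l ih => simp [ih]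

/-- Injectivity of relabeling on lists with equal `reduceOption`s. -/
lemma map_rel_inj : ∀ u u' : List PT, u.reduceOption = u'.reduceOption →
    u.map (Option.map rel) = u'.map (Option.map rel) → u = u' := by
  intro u
  induction u with
  | nil =>
      intro u' _ hm
      exact (List.map_eq_nil_iff.mp hm.symm).symm
  | cons a u ih =>
      intro u' hr hm
      rcases u' with _ | ⟨a', u'⟩
      · exact absurd hm (by simp)
      · simp only [List.map_cons, List.cons.injEq] at hm
        rcases a with _ | s
        · rcases a' with _ | s'
          · rw [ih u' (by simpa using hr) hm.2]
          · exact absurd hm.1 (by simp)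
        · rcases a' with _ | s'
          · exact absurd hm.1 (by simp)
          · simp only [List.reduceOption_cons_of_some, List.cons.injEq] at hr
            rw [hr.1, ih u' hr.2 hm.2]

/-- Surjectivity core: any list whose `reduceOption` consists of relabeled trees lifts. -/
lemma unrel_exists : ∀ (v : List PT) (l : List PTree), v.reduceOption = l.map rel →
    ∃ u : List PT, u.map (Option.map rel) = v ∧ u.reduceOption = l := by
  intro v
  induction v with
  | nil =>
      intro l hl
      refine ⟨[], rfl, ?_⟩
      have : l = [] := by
        cases l
        · rfl
        · exact absurd hl.symm (by simp)
      rw [this]; rfl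
  | cons a v ih =>
      intro l hl
      rcases a with _ | s
      · obtain ⟨u, hu1, hu2⟩ := ih l (by simpa using hl)
        exact ⟨none :: u, by simp [hu1], by simpa using hu2⟩
      · rcases l with _ | ⟨c, l⟩
        · exact absurd hl (by simp)
        · simp only [List.reduceOption_cons_of_some, List.map_cons, List.cons.injEq] at hl
          obtain ⟨u, hu1, hu2⟩ := ih l hl.2
          exact ⟨some c :: u, by simp [hu1, hl.1], by simp [hu2]⟩

namespace PSer

@[simp] lemma neg_coeff (f : PSer K) (S : PT) : (-f).1 S = -(f.1 S) := rfl

@[simp] lemma sub_coeff (f g : PSer K) (S : PT) : (f - g).1 S = f.1 S - g.1 S := by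
  rw [sub_eq_add_neg, add_coeff, neg_coeff, sub_eq_add_neg]

/-- Evaluation of the coefficient at `T` as an additive monoid homomorphism. -/
def coeffHom (T : PT) : PSer K →+ K where
  toFun f := f.1 T
  map_zero' := rfl
  map_add' _ _ := rfl

lemma sum_coeff {ι : Type*} (s : Finset ι) (F : ι → PSer K) (T : PT) :
    (∑ i ∈ s, F i).1 T = ∑ i ∈ s, (F i).1 T :=
  map_sum (coeffHom T) F s

lemma ext_coeff {f g : PSer K} (h : ∀ S, f.1 S = g.1 S) : f = g :=
  Subtype.ext (funext h)

lemma eq_zero_of_coeff_zero (f : PSer K) (h : ∀ S, f.1 S = 0) : f = 0 :=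
  ext_coeff h

lemma exists_coeff_ne_zero (f : PSer K) (h : f ≠ 0) : ∃ S, f.1 S ≠ 0 := by
  by_contra hc
  push_neg at hc
  exact h (eq_zero_of_coeff_zero f hc)

end PSer

open PSer

lemma ordx_le {f : PSer K} {S : PT} (h : f.1 S ≠ 0) : ordx f ≤ (degx S : ℕ∞) :=
  iInf₂_le S h

lemma le_ordx {f : PSer K} {n : ℕ} (h : ∀ S, f.1 S ≠ 0 → n ≤ degx S) :
    (n : ℕ∞) ≤ ordx f :=
  le_iInf₂ fun S hS => by exact_mod_cast h S hS

lemma ordx_ne_top {f : PSer K} (h : f ≠ 0) : ordx f ≠ ⊤ := by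
  obtain ⟨S, hS⟩ := exists_coeff_ne_zero f h
  intro ht
  have := ordx_le hS
  rw [ht] at this
  simp at this

lemma normx_nonneg (f : PSer K) : 0 ≤ normx f := by
  rw [normx]
  split
  · exact le_refl 0
  · positivity

/-- The key characterization of the `x`-adic norm. -/
lemma normx_le_pow_iff (f : PSer K) (n : ℕ) :
    normx f ≤ (2⁻¹ : ℝ) ^ n ↔ ∀ S, f.1 S ≠ 0 → n ≤ degx S := by
  constructor
  · intro h S hS
    have h1 : ordx f ≤ (degx S : ℕ∞) := ordx_le hS
    have h2 : ordx f ≠ ⊤ := fun ht => by rw [ht] at h1; simp at h1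
    rw [normx, if_neg h2] at h
    have h3 : n ≤ (ordx f).toNat := by
      by_contra hc
      push_neg at hc
      have := pow_lt_pow_right_of_lt_one₀ (by norm_num : (0:ℝ) < 2⁻¹) (by norm_num) hc
      linarith
    have h4 : ((ordx f).toNat : ℕ∞) ≤ (degx S : ℕ∞) := by rw [ENat.coe_toNat h2]; exact h1
    exact le_trans h3 (by exact_mod_cast h4)
  · intro h
    rw [normx]
    split
    · positivity
    · rename_i ht
      apply pow_le_pow_of_le_one (by norm_num) (by norm_num)
      have h1 : (n : ℕ∞) ≤ ordx f := le_ordx h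
      rw [← ENat.coe_toNat ht] at h1
      exact_mod_cast h1

lemma normx_lt_pow {f : PSer K} {n m : ℕ} (h : ∀ S, f.1 S ≠ 0 → n ≤ degx S) (hm : m < n) :
    normx f < (2⁻¹ : ℝ) ^ m :=
  lt_of_le_of_lt ((normx_le_pow_iff f n).2 h)
    (pow_lt_pow_right_of_lt_one₀ (by norm_num) (by norm_num) hm)

lemma supp_of_normx_lt {f : PSer K} {n : ℕ} (h : normx f < (2⁻¹ : ℝ) ^ n) :
    ∀ S, f.1 S ≠ 0 → n ≤ degx S :=
  (normx_le_pow_iff f n).1 (le_of_lt h)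

lemma normx_eq_zero_iff (f : PSer K) : normx f = 0 ↔ f = 0 := by
  constructor
  · intro h
    by_contra hf
    rw [normx, if_neg (ordx_ne_top hf)] at h
    have : (0:ℝ) < 2⁻¹ ^ (ordx f).toNat := by positivity
    linarith
  · intro h
    subst h
    have hs : ∀ S : PT, (0 : PSer K).1 S ≠ 0 → False := fun S hS => hS rfl
    have : ordx (0 : PSer K) = ⊤ := by
      rw [ordx]
      rw [iInf₂_eq_top]
      intro S hS
      exact absurd hS (hs S)
    rw [normx, if_pos this]

lemma ordx_neg (f : PSer K) : ordx (-f) = ordx f := by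
  have hset : {S : PT | (-f).1 S ≠ 0} = {S : PT | f.1 S ≠ 0} := by
    ext S; simp
  rw [ordx, ordx, hset]

lemma normx_neg (f : PSer K) : normx (-f) = normx f := by rw [normx, normx, ordx_neg]

lemma normx_sub_comm (f g : PSer K) : normx (f - g) = normx (g - f) := by
  rw [← normx_neg (f - g), neg_sub]

lemma normx_add_le (f g : PSer K) : normx (f + g) ≤ max (normx f) (normx g) := by
  by_cases hf : f = 0
  · subst hf; rw [zero_add]; exact le_max_right _ _
  by_cases hg : g = 0
  · subst hg; rw [add_zero]; exact le_max_left _ _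
  set a := (ordx f).toNat
  set b := (ordx g).toNat
  have hfa : normx f = 2⁻¹ ^ a := by rw [normx, if_neg (ordx_ne_top hf)]
  have hgb : normx g = 2⁻¹ ^ b := by rw [normx, if_neg (ordx_ne_top hg)]
  have hsf : ∀ S, f.1 S ≠ 0 → a ≤ degx S := (normx_le_pow_iff f a).1 (le_of_eq hfa)
  have hsg : ∀ S, g.1 S ≠ 0 → b ≤ degx S := (normx_le_pow_iff g b).1 (le_of_eq hgb)
  have hsum : ∀ S, (f + g).1 S ≠ 0 → min a b ≤ degx S := by
    intro S hS
    rw [add_coeff] at hS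
    by_cases h1 : f.1 S = 0
    · have h2 : g.1 S ≠ 0 := fun h2 => hS (by rw [h1, h2, add_zero])
      exact le_trans (min_le_right _ _) (hsg S h2)
    · exact le_trans (min_le_left _ _) (hsf S h1)
  apply le_trans ((normx_le_pow_iff _ (min a b)).2 hsum)
  rcases le_total a b with hab | hab
  · rw [min_eq_left hab, hfa, hgb]
    apply le_max_of_le_left le_rfl
  · rw [min_eq_right hab, hfa, hgb]
    apply le_max_of_le_right le_rfl

lemma normx_sub_le_add (f g h : PSer K) :
    normx (f - h) ≤ normx (f - g) + normx (g - h) := by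
  have : f - h = (f - g) + (g - h) := by abel
  rw [this]
  apply le_trans (normx_add_le _ _)
  rcases max_cases (normx (f - g)) (normx (g - h)) with ⟨h1, _⟩ | ⟨h1, _⟩ <;> rw [h1]
  · have := normx_nonneg (g - h); linarith
  · have := normx_nonneg (f - g); linarith

open Classical in
@[simp] lemma mono_coeff (S T : PT) : (mono (K := K) S).1 T = if T = S then 1 else 0 := rfl

/-- Any planar power series with finite support is the sum of its monomials. -/
lemma eq_sum_mono (g : PSer K) (h : {S : PT | g.1 S ≠ 0}.Finite) :
    g = ∑ S ∈ h.toFinset, g.1 S • mono S := by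
  classical
  apply ext_coeff
  intro T
  rw [sum_coeff]
  have : ∀ S ∈ h.toFinset, (g.1 S • (mono (K := K) S)).1 T
      = if S = T then g.1 T else 0 := by
    intro S _
    rw [smul_coeff, mono_coeff]
    by_cases hST : S = T
    · subst hST; simp
    · rw [if_neg (Ne.symm hST), if_neg hST, mul_zero]
  rw [Finset.sum_congr rfl this, Finset.sum_ite_eq']
  split
  · rfl
  · rename_i hT
    rw [Set.Finite.mem_toFinset] at hT
    simp only [Set.mem_setOf_eq, not_not] at hT
    exact hT

end Planar

namespace Planar

variable {K : Type} [Field K]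

open PTree PSer

/-- The children-or-self list of a possibly-trivial planar monomial. -/
def childListPT : PT → List PTree
  | none => []
  | some t => t :: (match t with | .leaf _ => [] | .node a b l => a :: b :: l)

lemma reduceOption_subset_childList {u : List PT} {S : PT} (h : graft u = S) :
    ∀ a ∈ u.reduceOption, a ∈ childListPT S := by
  intro a ha
  rcases S with _ | t
  · rw [reduceOption_of_graft_none h] at ha
    simp at ha
  · rcases reduceOption_of_graft_some h with h1 | ⟨t1, t2, ts, ht, h1⟩
    · rw [h1] at ha
      simp only [List.mem_singleton] at ha
      subst ha
      simp [childListPT]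
    · rw [h1] at ha
      subst ht
      simp only [childListPT, List.mem_cons]
      simp only [List.mem_cons] at ha
      tauto

lemma finite_decomps (m : ℕ) (S : PT) :
    {u : List PT | u.length = m ∧ graft u = S}.Finite := by
  classical
  set F : Set PT := insert none ((fun a => (some a : PT)) '' {a | a ∈ childListPT S}) with hF
  have hFfin : F.Finite :=
    (((childListPT S).finite_toSet).image _).insert none
  apply (PTree.finite_bounded_lists hFfin m).subset
  rintro u ⟨hlen, hgr⟩
  refine ⟨le_of_eq hlen, ?_⟩
  intro x hx
  rcases x with _ | a
  · exact Set.mem_insert _ _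
  · right
    exact ⟨a, reduceOption_subset_childList hgr a (List.reduceOption_mem_iff.2 hx), rfl⟩

/-- The decompositions of `S` into `m` factors, as a finset. -/
noncomputable def Dfin (m : ℕ) (S : PT) : Finset (List PT) := (finite_decomps m S).toFinset

lemma mem_Dfin {m : ℕ} {S : PT} {u : List PT} :
    u ∈ Dfin m S ↔ u.length = m ∧ graft u = S := by
  rw [Dfin, Set.Finite.mem_toFinset]
  rfl

lemma bulletCoeff_eq_sum (fs : List (PSer K)) (S : PT) :
    bulletCoeff fs S
      = ∑ u ∈ Dfin fs.length S, (List.zipWith (fun f T => f.1 T) fs u).prod := by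
  rw [bulletCoeff, ← finsum_mem_coe_finset]
  congr 1
  rw [Dfin, Set.Finite.coe_toFinset]

lemma exists_decomp {fs : List (PSer K)} {S : PT} (h : bulletCoeff fs S ≠ 0) :
    ∃ u, ∃ _ : u.length = fs.length, graft u = S ∧
      ∀ i (hi : i < fs.length), (fs[i]).1 (u[i]'(by omega)) ≠ 0 := by
  rw [bulletCoeff_eq_sum] at h
  obtain ⟨u, hu, hne⟩ := Finset.exists_ne_zero_of_sum_ne_zero h
  rw [mem_Dfin] at hu
  refine ⟨u, hu.1, hu.2, ?_⟩
  intro i hi h0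
  apply hne
  apply List.prod_eq_zero
  rw [List.mem_iff_getElem]
  refine ⟨i, by rw [List.length_zipWith, hu.1]; omega, ?_⟩
  rw [List.getElem_zipWith]
  exact h0

lemma bullet_support_finite (fs : List (PSer K)) (n : ℕ) :
    {S : PT | bulletCoeff fs S ≠ 0 ∧ degx S = n}.Finite := by
  classical
  set F : Set PT := {T | (∃ f ∈ fs, f.1 T ≠ 0) ∧ degx T ≤ n} with hF
  have hFfin : F.Finite := by
    have hsub : F ⊆ ⋃ f ∈ {f : PSer K | f ∈ fs}, ⋃ j ∈ Finset.range (n + 1),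
        {T : PT | f.1 T ≠ 0 ∧ degx T = j} := by
      rintro T ⟨⟨f, hf, hT⟩, hdeg⟩
      refine Set.mem_biUnion hf ?_
      refine Set.mem_biUnion (Finset.mem_range.2 (by omega)) ⟨hT, rfl⟩
    apply Set.Finite.subset ?_ hsub
    apply Set.Finite.biUnion (fs.finite_toSet)
    intro f _
    apply Set.Finite.biUnion (Finset.finite_toSet _)
    intro j _
    exact f.2 j
  have key : {S : PT | bulletCoeff fs S ≠ 0 ∧ degx S = n}
      ⊆ graft '' {u : List PT | u.length ≤ fs.length ∧ ∀ x ∈ u, x ∈ F} := by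
    rintro S ⟨hne, hdeg⟩
    obtain ⟨u, hlen, hgr, hpt⟩ := exists_decomp hne
    refine ⟨u, ⟨le_of_eq hlen, ?_⟩, hgr⟩
    intro x hx
    rw [List.mem_iff_getElem] at hx
    obtain ⟨i, hi, rfl⟩ := hx
    have hi' : i < fs.length := by omega
    constructor
    · exact ⟨fs[i], by simp, hpt i hi'⟩
    · have hsum : degx S = (u.map degx).sum := by rw [← hgr, degx_graft]
      have : degx u[i] ≤ (u.map degx).sum := by
        apply List.single_le_sum (fun x _ => Nat.zero_le x)
        rw [List.mem_iff_getElem]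
        exact ⟨i, by simpa using hi, by rw [List.getElem_map]⟩
      omega
  exact (((PTree.finite_bounded_lists hFfin fs.length).image graft)).subset key

lemma bullet_eq (fs : List (PSer K)) :
    bullet fs = ⟨bulletCoeff fs, bullet_support_finite fs⟩ := by
  rw [bullet]; exact dif_pos (bullet_support_finite fs)

@[simp] lemma bullet_coeff (fs : List (PSer K)) (S : PT) :
    (bullet fs).1 S = bulletCoeff fs S := by rw [bullet_eq]

lemma onlyX_bullet {fs : List (PSer K)} (h : ∀ f ∈ fs, OnlyX f) : OnlyX (bullet fs) := by
  intro S hS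
  rw [bullet_coeff] at hS
  obtain ⟨u, hlen, hgr, hpt⟩ := exists_decomp hS
  rw [← hgr, degy_graft]
  apply List.sum_eq_zero
  intro x hx
  rw [List.mem_iff_getElem] at hx
  obtain ⟨i, hi, rfl⟩ := hx
  rw [List.getElem_map]
  have hi' : i < fs.length := by rw [List.length_map] at hi; omega
  have h1 : i < u.length := by omega
  exact h fs[i] (by simp) _ (hpt i hi')

lemma bulletX_val (fs : List (Kx K)) :
    (bulletX fs).1 = bullet (fs.map Subtype.val) := by
  rw [bulletX, dif_pos]
  apply onlyX_bullet
  intro f hf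
  rw [List.mem_map] at hf
  obtain ⟨g, _, rfl⟩ := hf
  exact g.2

/-- The universal derivation on coefficients: replace the unique `y`-leaf by `x`. -/
noncomputable def D (f : PSer K) : PSer K :=
  ⟨fun T => T.elim 0 (fun t => if countLeaf .vy t = 1 then f.1 (some (rel t)) else 0), by
    intro n
    apply ((PTree.finite_trees (n + 1)).image some).subset
    rintro T ⟨h1, h2⟩
    rcases T with _ | t
    · exact absurd rfl h1
    · simp only [Option.elim] at h1
      by_cases hcy : countLeaf .vy t = 1
      · refine ⟨t, ?_, rfl⟩
        simp only [degx_some] at h2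
        simp only [Set.mem_setOf_eq]
        omega
      · rw [if_neg hcy] at h1
        exact absurd rfl h1⟩

@[simp] lemma D_none (f : PSer K) : (D f).1 none = 0 := rfl

@[simp] lemma D_some (f : PSer K) (t : PTree) :
    (D f).1 (some t) = if countLeaf .vy t = 1 then f.1 (some (rel t)) else 0 := rfl

lemma D_add (f g : PSer K) : D (f + g) = D f + D g := by
  apply ext_coeff
  intro S
  rcases S with _ | t
  · simp
  · simp only [D_some, add_coeff, D_some]
    split
    · rfl
    · rw [add_zero]

lemma D_smul (a : K) (f : PSer K) : D (a • f) = a • D f := by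
  apply ext_coeff
  intro S
  rcases S with _ | t
  · simp
  · simp only [D_some, smul_coeff, D_some]
    split
    · rfl
    · rw [mul_zero]

lemma D_supp {f : PSer K} {n : ℕ} (h : ∀ S, f.1 S ≠ 0 → n + 1 ≤ degx S) :
    ∀ S, (D f).1 S ≠ 0 → n ≤ degx S := by
  intro S hS
  rcases S with _ | t
  · exact absurd rfl hS
  · rw [D_some] at hS
    by_cases hcy : countLeaf .vy t = 1
    · rw [if_pos hcy] at hS
      have := h _ hS
      simp only [degx_some, countx_rel] at this ⊢
      omega
    · rw [if_neg hcy] at hS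
      exact absurd rfl hS

end Planar

namespace Planar

variable {K : Type} [Field K]

open PTree PSer

lemma list_sum_getD (l : List ℕ) : l.sum = ∑ i ∈ Finset.range l.length, l.getD i 0 := by
  induction l with
  | nil => simp
  | cons a l ih =>
      rw [List.sum_cons, List.length_cons, Finset.sum_range_succ', ih]
      simp only [List.getD_cons_succ, List.getD_cons_zero]
      omega

lemma exists_unique_one {m : ℕ} (d : ℕ → ℕ) (h : ∑ i ∈ Finset.range m, d i = 1) :
    ∃ j0, j0 < m ∧ d j0 = 1 ∧ ∀ j < m, j ≠ j0 → d j = 0 := by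
  classical
  have hex : ∃ j0 ∈ Finset.range m, d j0 ≠ 0 := by
    by_contra hc
    push_neg at hc
    rw [Finset.sum_eq_zero hc] at h
    exact absurd h (by norm_num)
  obtain ⟨j0, hj0, hne⟩ := hex
  have hsplit := Finset.add_sum_erase _ d hj0
  rw [h] at hsplit
  have h1 : d j0 = 1 := by omega
  have h2 : ∑ j ∈ (Finset.range m).erase j0, d j = 0 := by omega
  refine ⟨j0, Finset.mem_range.1 hj0, h1, ?_⟩
  intro j hj hne'
  exact (Finset.sum_eq_zero_iff.1 h2) j (Finset.mem_erase.2 ⟨hne', Finset.mem_range.2 hj⟩)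

/-- The coefficientwise Leibniz rule for the universal derivation. -/
lemma D_bullet (fs : List (Kx K)) :
    D (bullet (fs.map Subtype.val)) = ∑ i : Fin fs.length,
      bullet ((fs.map (fun f => f.1)).set i.1 (D (fs.get i).1)) := by
  classical
  apply ext_coeff
  intro T
  rw [sum_coeff]
  have hRHSi : ∀ i : Fin fs.length,
      (bullet ((fs.map (fun f : Kx K => f.1)).set i.1 (D (fs.get i).1))).1 T
      = ∑ u ∈ Dfin fs.length T, (List.zipWith (fun f T => f.1 T)
          ((fs.map (fun f : Kx K => f.1)).set i.1 (D (fs.get i).1)) u).prod := by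
    intro i
    rw [bullet_coeff, bulletCoeff_eq_sum]
    congr 2
    simp
  rw [Finset.sum_congr rfl (fun i _ => hRHSi i), Finset.sum_comm]
  rcases T with _ | t
  · rw [D_none]
    symm
    apply Finset.sum_eq_zero
    intro u hu
    obtain ⟨hlen, hgr⟩ := mem_Dfin.1 hu
    have hnone : ∀ x ∈ u, x = none := by
      have := reduceOption_of_graft_none hgr
      rwa [reduceOption_nil_iff] at this
    apply Finset.sum_eq_zero
    intro i _
    apply List.prod_eq_zero
    have hiu : i.1 < u.length := by rw [hlen]; exact i.2
    have hizip : i.1 < (List.zipWith (fun (f : PSer K) (T : PT) => f.1 T)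
        ((fs.map (fun f : Kx K => f.1)).set i.1 (D (fs.get i).1)) u).length := by
      rw [List.length_zipWith]
      simp only [List.length_set, List.length_map]
      omega
    rw [List.mem_iff_getElem]
    refine ⟨i.1, hizip, ?_⟩
    rw [List.getElem_zipWith]
    have h1 : ((fs.map (fun f : Kx K => f.1)).set i.1 (D (fs.get i).1))[i.1]'(by
        simp only [List.length_set, List.length_map]; exact i.2) = D (fs.get i).1 :=
      List.getElem_set_self _
    rw [h1, hnone _ (List.getElem_mem _), D_none]
  · by_cases hcy : countLeaf .vy t = 1
    · -- main case
      rw [D_some, if_pos hcy, bullet_coeff, bulletCoeff_eq_sum, List.length_map]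
      have step1 : ∀ u ∈ Dfin fs.length (some t),
          (∑ i : Fin fs.length, (List.zipWith (fun f T => f.1 T)
            ((fs.map (fun f : Kx K => f.1)).set i.1 (D (fs.get i).1)) u).prod)
          = (List.zipWith (fun (f : PSer K) (T : PT) => f.1 T) (fs.map (fun f : Kx K => f.1))
              (u.map (Option.map rel))).prod := by
        intro u hu
        obtain ⟨hlen, hgr⟩ := mem_Dfin.1 hu
        set dy : ℕ → ℕ := fun j => (u.map degy).getD j 0 with hdy
        have hdyj : ∀ j, j < fs.length → ∀ (hj : j < u.length), dy j = degy u[j] := by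
          intro j _ hj
          rw [hdy]
          simp only
          rw [List.getD_eq_getElem _ _ (by simpa using hj), List.getElem_map]
        have hsum : ∑ j ∈ Finset.range fs.length, dy j = 1 := by
          have h1 : degy (some t) = (u.map degy).sum := by rw [← hgr, degy_graft]
          have h2 := list_sum_getD (u.map degy)
          rw [List.length_map, hlen] at h2
          rw [degy_some, hcy] at h1
          rw [← h2, ← h1]
        obtain ⟨j0, hj0m, hj01, hj00⟩ := exists_unique_one dy hsum
        have hj0u : j0 < u.length := by omega
        -- u[j0] = some s with one y leaf
        have hj0some : ∃ s, u[j0] = some s ∧ countLeaf .vy s = 1 := by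
          rcases hu0 : u[j0] with _ | s
          · exfalso
            have h' := hdyj j0 hj0m hj0u
            rw [hu0, hj01] at h'
            simp at h'
          · refine ⟨s, rfl, ?_⟩
            have := hdyj j0 hj0m hj0u
            rw [hu0] at this
            simp only [degy_some] at this
            omega
        obtain ⟨s, hs, hcys⟩ := hj0some
        rw [Finset.sum_eq_single_of_mem ⟨j0, hj0m⟩ (Finset.mem_univ _) ?other]
        case other =>
          intro i _ hne
          apply List.prod_eq_zero
          have hizip : j0 < (List.zipWith (fun (f : PSer K) (T : PT) => f.1 T)
              ((fs.map (fun f : Kx K => f.1)).set i.1 (D (fs.get i).1)) u).length := by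
            rw [List.length_zipWith]
            simp only [List.length_set, List.length_map]
            omega
          rw [List.mem_iff_getElem]
          refine ⟨j0, hizip, ?_⟩
          rw [List.getElem_zipWith]
          have hne' : i.1 ≠ j0 := fun hEq => hne (Fin.ext hEq)
          have h1 : ((fs.map (fun f : Kx K => f.1)).set i.1 (D (fs.get i).1))[j0]'(by
              simp only [List.length_set, List.length_map]; omega)
              = (fs[j0]'(hj0m)).1 := by
            rw [List.getElem_set_ne hne', List.getElem_map]
          rw [h1, hs]
          by_contra hC
          have := (fs[j0]'hj0m).2 _ hC
          simp only [degy_some] at this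
          omega
        · -- the surviving term
          congr 1
          apply List.ext_getElem
          · rw [List.length_zipWith, List.length_zipWith]
            simp [hlen]
          · intro j h1 h2
            rw [List.getElem_zipWith, List.getElem_zipWith]
            have hjf : j < fs.length := by
              rw [List.length_zipWith] at h1
              simp only [List.length_set, List.length_map] at h1
              omega
            have hju : j < u.length := by omega
            by_cases hj : j = j0
            · subst hj
              have hset : ((fs.map (fun f : Kx K => f.1)).set j (D (fs.get ⟨j, hjf⟩).1))[j]'(by
                  simp only [List.length_set, List.length_map]; omega) = D (fs.get ⟨j, hjf⟩).1 :=
                List.getElem_set_self _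
              rw [hset, hs, D_some, if_pos hcys]
              rw [List.getElem_map, List.getElem_map, hs]
              rfl
            · have hset : ((fs.map (fun f : Kx K => f.1)).set j0 (D (fs.get ⟨j0, hj0m⟩).1))[j]'(by
                  simp only [List.length_set, List.length_map]; omega)
                  = (fs[j]'hjf).1 := by
                rw [List.getElem_set_ne (fun hEq => hj hEq.symm), List.getElem_map]
              have hrelj : (u.map (Option.map rel))[j]'(by simpa using hju) = u[j] := by
                rw [List.getElem_map]
                rcases huj : u[j] with _ | s'
                · rfl
                · have hz : countLeaf .vy s' = 0 := by
                    have := hdyj j hjf hju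
                    rw [huj] at this
                    simp only [degy_some] at this
                    have := hj00 j hjf hj
                    omega
                  simp [rel_of_county_eq_zero s' hz]
              rw [hset, hrelj, List.getElem_map]
      rw [Finset.sum_congr rfl step1]
      symm
      apply Finset.sum_bij (i := fun u _ => u.map (Option.map rel))
      · -- maps into
        intro u hu
        obtain ⟨hlen, hgr⟩ := mem_Dfin.1 hu
        rw [mem_Dfin]
        constructor
        · rw [List.length_map]; exact hlen
        · rw [graft_map_rel, hgr]; rfl
      · -- injective
        intro u1 hu1 u2 hu2 heq
        obtain ⟨hl1, hg1⟩ := mem_Dfin.1 hu1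
        obtain ⟨hl2, hg2⟩ := mem_Dfin.1 hu2
        have hro : (u1.reduceOption).map rel = (u2.reduceOption).map rel := by
          rw [← List.reduceOption_map, ← List.reduceOption_map, heq]
        have hlenro : u1.reduceOption.length = u2.reduceOption.length := by
          have := congrArg List.length hro
          simpa using this
        have hred : u1.reduceOption = u2.reduceOption := by
          rcases reduceOption_of_graft_some hg1 with ha | ⟨a1, b1, l1, hna, ha⟩ <;>
            rcases reduceOption_of_graft_some hg2 with hb | ⟨a2, b2, l2, hnb, hb⟩
          · rw [ha, hb]
          · exfalso; rw [ha, hb] at hlenro; simp at hlenro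
          · exfalso; rw [ha, hb] at hlenro; simp at hlenro
          · rw [hna] at hnb
            injection hnb with e1 e2 e3
            rw [ha, hb, e1, e2, e3]
        exact map_rel_inj u1 u2 hred heq
      · -- surjective
        intro v hv
        obtain ⟨hvlen, hvgr⟩ := mem_Dfin.1 hv
        rcases reduceOption_of_graft_some hvgr with hb | ⟨a, b, l, hn, hb⟩
        · obtain ⟨u, hu1, hu2⟩ := unrel_exists v [t] (by rw [hb]; rfl)
          refine ⟨u, mem_Dfin.2 ⟨?_, graft_of_reduceOption_single hu2⟩, hu1⟩
          have := congrArg List.length hu1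
          simpa [hvlen] using this
        · rcases t with w | ⟨t1, t2, ts⟩
          · exfalso; rw [rel_leaf] at hn; exact absurd hn (by simp)
          · rw [rel_node] at hn
            injection hn with e1 e2 e3
            obtain ⟨u, hu1, hu2⟩ := unrel_exists v (t1 :: t2 :: ts)
              (by rw [hb, ← e1, ← e2, ← e3]; rfl)
            refine ⟨u, mem_Dfin.2 ⟨?_, graft_of_reduceOption_cons hu2⟩, hu1⟩
            have := congrArg List.length hu1
            simpa [hvlen] using this
      · -- values
        intro u hu
        rfl
    · -- degy T ≠ 1 : both sides vanish
      rw [D_some, if_neg hcy]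
      symm
      apply Finset.sum_eq_zero
      intro u hu
      obtain ⟨hlen, hgr⟩ := mem_Dfin.1 hu
      apply Finset.sum_eq_zero
      intro i _
      by_contra hP
      have hpt : ∀ j (hj : j < fs.length),
          (((fs.map (fun f : Kx K => f.1)).set i.1 (D (fs.get i).1))[j]'(by
            simp only [List.length_set, List.length_map]; omega)).1 (u[j]'(by omega)) ≠ 0 := by
        intro j hj h0
        apply hP
        apply List.prod_eq_zero
        rw [List.mem_iff_getElem]
        refine ⟨j, by rw [List.length_zipWith]; simp only [List.length_set, List.length_map]; omega, ?_⟩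
        rw [List.getElem_zipWith]
        exact h0
      -- compute degy of each entry
      have hdeg : ∀ j (hj : j < fs.length), degy (u[j]'(by omega)) = if j = i.1 then 1 else 0 := by
        intro j hj
        by_cases hji : j = i.1
        · rw [if_pos hji]
          have h1 := hpt j hj
          have hset : ((fs.map (fun f : Kx K => f.1)).set i.1 (D (fs.get i).1))[j]'(by
              simp only [List.length_set, List.length_map]; omega) = D (fs.get i).1 := by
            subst hji
            exact List.getElem_set_self _
          rw [hset] at h1
          rcases huj : u[j]'(by omega) with _ | s
          · rw [huj] at h1; exact absurd rfl h1
          · rw [huj] at h1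
            rw [D_some] at h1
            by_cases hcys : countLeaf .vy s = 1
            · simp [hcys]
            · rw [if_neg hcys] at h1; exact absurd rfl h1
        · rw [if_neg hji]
          have h1 := hpt j hj
          have hset : ((fs.map (fun f : Kx K => f.1)).set i.1 (D (fs.get i).1))[j]'(by
              simp only [List.length_set, List.length_map]; omega) = (fs[j]'hj).1 := by
            rw [List.getElem_set_ne (fun hEq => hji hEq.symm), List.getElem_map]
          rw [hset] at h1
          exact (fs[j]'hj).2 _ h1
      have hsum : degy (some t) = 1 := by
        rw [← hgr, degy_graft, list_sum_getD, List.length_map, hlen]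
        have : ∀ j ∈ Finset.range fs.length,
            (u.map degy).getD j 0 = if j = i.1 then 1 else 0 := by
          intro j hj
          rw [Finset.mem_range] at hj
          rw [List.getD_eq_getElem _ _ (by simp; omega), List.getElem_map]
          exact hdeg j hj
        rw [Finset.sum_congr rfl this, Finset.sum_ite_eq' _ i.1]
        rw [if_pos (Finset.mem_range.2 i.2)]
      rw [degy_some] at hsum
      exact hcy hsum

/-- The universal derivation `K{{x}} → K{{x,y}`. -/
noncomputable def UD : Kx K → PSer K := fun f => D f.1

lemma D_neg (f : PSer K) : D (-f) = -D f := by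
  have h : -f = (-1 : K) • f := by rw [neg_one_smul]
  rw [h, D_smul, neg_one_smul]

lemma D_sub (f g : PSer K) : D (f - g) = D f - D g := by
  rw [sub_eq_add_neg, D_add, D_neg, sub_eq_add_neg]

lemma D_X : D (Xps : PSer K) = Yps := by
  unfold Xps Yps
  apply ext_coeff
  intro T
  rcases T with _ | t
  · simp
  · rcases t with v | ⟨t1, t2, ts⟩
    · cases v <;> simp
    · simp

lemma UD_isUDeriv : IsUDeriv (UD (K := K)) := by
  constructor
  · constructor
    · intro f g
      have h : ((f + g : Kx K) : PSer K) = f.1 + g.1 := rfl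
      show D ((f + g : Kx K) : PSer K) = D f.1 + D g.1
      rw [h, D_add]
    · intro c f
      have h : ((c • f : Kx K) : PSer K) = c • f.1 := rfl
      show D ((c • f : Kx K) : PSer K) = c • D f.1
      rw [h, D_smul]
  · -- continuity
    intro a ε hε
    obtain ⟨k, hk⟩ := exists_pow_lt_of_lt_one hε (by norm_num : (2⁻¹ : ℝ) < 1)
    refine ⟨(2⁻¹ : ℝ) ^ (k + 2), by positivity, ?_⟩
    intro b hb
    have hb' : normx (b.1 - a.1) < (2⁻¹ : ℝ) ^ (k + 2) := hb
    have hsupp := supp_of_normx_lt hb'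
    have hsupp2 : ∀ S, (D (b.1 - a.1)).1 S ≠ 0 → k + 1 ≤ degx S :=
      D_supp (fun S hS => by have := hsupp S hS; omega)
    have heq : distx (UD b) (UD a) = normx (D (b.1 - a.1)) := by
      rw [D_sub]; rfl
    rw [heq]
    exact lt_trans (normx_lt_pow hsupp2 (by omega)) hk
  · -- x ↦ y
    show D (xX : Kx K).1 = Yps
    exact D_X
  · -- Leibniz
    intro fs hlen
    show D (bulletX fs).1 = _
    rw [bulletX_val]
    exact D_bullet fs

end Planar

namespace Planar

variable {K : Type} [Field K]

open PTree PSer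

open Classical in
@[simp] lemma onePS_coeff (T : PT) :
    (onePS : PSer K).1 T = if T = none then 1 else 0 := rfl

lemma graft_pair_right (S : PT) : graft [S, none] = S := by
  rcases S with _ | t
  · exact graft_of_reduceOption_nil (by simp)
  · exact graft_of_reduceOption_single (by simp)

lemma graft_pair_left (S : PT) : graft [none, S] = S := by
  rcases S with _ | t
  · exact graft_of_reduceOption_nil (by simp)
  · exact graft_of_reduceOption_single (by simp)

lemma bullet_pair_right (g : PSer K) : bullet [g, onePS] = g := by
  apply ext_coeff
  intro S
  rw [bullet_coeff, bulletCoeff_eq_sum]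
  rw [Finset.sum_eq_single_of_mem [S, none]
    ((mem_Dfin (m := ([g, onePS] : List (PSer K)).length)).2 ⟨rfl, graft_pair_right S⟩) ?side]
  case side =>
    intro u hu hne
    obtain ⟨hlen, hgr⟩ := mem_Dfin.1 hu
    have hlen2 : u.length = 2 := hlen
    rw [List.length_eq_two] at hlen2
    obtain ⟨u1, u2, rfl⟩ := hlen2
    rcases u2 with _ | t2
    · exfalso
      rw [graft_pair_right] at hgr
      exact hne (by rw [hgr])
    · simp
  · simp

lemma bullet_pair_left (g : PSer K) : bullet [onePS, g] = g := by
  apply ext_coeff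
  intro S
  rw [bullet_coeff, bulletCoeff_eq_sum]
  rw [Finset.sum_eq_single_of_mem [none, S]
    ((mem_Dfin (m := ([onePS, g] : List (PSer K)).length)).2 ⟨rfl, graft_pair_left S⟩) ?side]
  case side =>
    intro u hu hne
    obtain ⟨hlen, hgr⟩ := mem_Dfin.1 hu
    have hlen2 : u.length = 2 := hlen
    rw [List.length_eq_two] at hlen2
    obtain ⟨u1, u2, rfl⟩ := hlen2
    rcases u1 with _ | t1
    · exfalso
      rw [graft_pair_left] at hgr
      exact hne (by rw [hgr])
    · simp
  · simp

lemma UDeriv_one {d : Kx K → PSer K} (h : IsUDeriv d) : d oneX = 0 := by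
  have hbx : bulletX [oneX, oneX] = (oneX : Kx K) := by
    apply Subtype.ext
    rw [bulletX_val]
    exact bullet_pair_right onePS
  have hl := h.leibniz [oneX, oneX] (by simp)
  rw [hbx] at hl
  have hl' : d oneX = ∑ i : Fin 2,
      bullet ((([oneX, oneX] : List (Kx K)).map (fun f => f.1)).set i.1
        (d (([oneX, oneX] : List (Kx K)).get ⟨i.1, i.2⟩))) := hl
  rw [Fin.sum_univ_two] at hl'
  have e0 : (([oneX, oneX] : List (Kx K)).map (fun f => f.1)).set ((0 : Fin 2) : ℕ)
      (d (([oneX, oneX] : List (Kx K)).get ⟨((0 : Fin 2) : ℕ), (0 : Fin 2).2⟩))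
      = [d oneX, onePS] := rfl
  have e1 : (([oneX, oneX] : List (Kx K)).map (fun f => f.1)).set ((1 : Fin 2) : ℕ)
      (d (([oneX, oneX] : List (Kx K)).get ⟨((1 : Fin 2) : ℕ), (1 : Fin 2).2⟩))
      = [onePS, d oneX] := rfl
  rw [e0, e1, bullet_pair_right, bullet_pair_left] at hl'
  exact (add_eq_left.1 hl'.symm)

open Classical in
lemma zip_mono_prod : ∀ (l : List PTree) (u : List PT), u.length = l.length →
    (List.zipWith (fun f T => f.1 T) (l.map fun c => mono (K := K) (some c)) u).prod
      = if u = l.map some then 1 else 0 := by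
  intro l
  induction l with
  | nil =>
      intro u hu
      rw [List.length_eq_zero_iff.1 hu]
      simp
  | cons c l ih =>
      intro u hu
      rcases u with _ | ⟨a, u⟩
      · exact absurd hu (by simp)
      · simp only [List.map_cons, List.zipWith_cons_cons, List.prod_cons]
        rw [ih u (by simpa using hu), mono_coeff]
        by_cases ha : a = some c
        · subst ha
          rw [if_pos rfl, one_mul]
          by_cases hu' : u = l.map some
          · rw [if_pos hu', if_pos (by rw [hu'])]
          · rw [if_neg hu', if_neg (by simp [hu'])]
        · rw [if_neg ha, zero_mul, if_neg (by simp [ha])]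

lemma bullet_mono_list (t1 t2 : PTree) (ts : List PTree) :
    bullet ((t1 :: t2 :: ts).map fun c => mono (K := K) (some c))
      = mono (some (.node t1 t2 ts)) := by
  classical
  apply ext_coeff
  intro S
  rw [bullet_coeff, bulletCoeff_eq_sum, mono_coeff]
  set l : List PTree := t1 :: t2 :: ts with hl
  have hterm : ∀ u ∈ Dfin (l.map fun c => mono (K := K) (some c)).length S,
      (List.zipWith (fun (f : PSer K) T => f.1 T) (l.map fun c => mono (K := K) (some c)) u).prod
        = if u = l.map some then 1 else 0 := by
    intro u hu
    exact zip_mono_prod l u (by have := (mem_Dfin.1 hu).1; simpa using this)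
  rw [Finset.sum_congr rfl hterm, Finset.sum_ite_eq' _ (l.map some)]
  have hg : graft (l.map some) = some (.node t1 t2 ts) :=
    graft_of_reduceOption_cons (by rw [reduceOption_map_some])
  by_cases hS : S = some (.node t1 t2 ts)
  · rw [if_pos (mem_Dfin.2 ⟨by simp, by rw [hg, hS]⟩), if_pos hS]
  · rw [if_neg (fun hmem => hS (by rw [← (mem_Dfin.1 hmem).2, hg])), if_neg hS]

lemma mono_mem_kxSub {S : PT} (h : degy S = 0) : mono (K := K) S ∈ kxSub K := by
  intro T hT
  have hTS : T = S := by
    by_contra hc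
    rw [mono_coeff, if_neg hc] at hT
    exact hT rfl
  rwa [hTS]

lemma UDeriv_agree_mono {d₁ d₂ : Kx K → PSer K} (h₁ : IsUDeriv d₁) (h₂ : IsUDeriv d₂) :
    ∀ (t : PTree) (h : mono (K := K) (some t) ∈ kxSub K),
      d₁ ⟨mono (some t), h⟩ = d₂ ⟨mono (some t), h⟩ := by
  apply PTree.strongRecOn
    (P := fun t => ∀ h : mono (K := K) (some t) ∈ kxSub K,
      d₁ ⟨mono (some t), h⟩ = d₂ ⟨mono (some t), h⟩)
  · intro v h
    cases v
    · have hx : (⟨mono (some (.leaf .vx)), h⟩ : Kx K) = xX := Subtype.ext rfl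
      rw [hx, h₁.map_X, h₂.map_X]
    · exfalso
      have := h (some (.leaf .vy)) (by rw [mono_coeff, if_pos rfl]; exact one_ne_zero)
      simp at this
  · intro t1 t2 ts ih1 ih2 ihr h
    have hcy : countLeaf .vy (.node t1 t2 ts) = 0 := by
      have := h (some (.node t1 t2 ts)) (by rw [mono_coeff, if_pos rfl]; exact one_ne_zero)
      simpa using this
    rw [countLeaf_node] at hcy
    have hcy1 : countLeaf .vy t1 = 0 := by omega
    have hcy2 : countLeaf .vy t2 = 0 := by omega
    have hcyr : ∀ c ∈ ts, countLeaf .vy c = 0 := by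
      intro c hc
      have hz : (ts.map (countLeaf .vy)).sum = 0 := by omega
      exact List.sum_eq_zero_iff.1 hz _ (List.mem_map_of_mem hc)
    have hmem : ∀ c : PTree, countLeaf .vy c = 0 → mono (K := K) (some c) ∈ kxSub K :=
      fun c hc => mono_mem_kxSub (by simpa using hc)
    set fs : List (Kx K) := ⟨mono (some t1), hmem t1 hcy1⟩ :: ⟨mono (some t2), hmem t2 hcy2⟩ ::
      (ts.attach.map fun c => ⟨mono (some c.1), hmem c.1 (hcyr c.1 c.2)⟩) with hfs
    have hfs_val : fs.map (fun f : Kx K => f.1) = (t1 :: t2 :: ts).map fun c => mono (some c) := by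
      simp [hfs, List.map_map]
    have hbx : bulletX fs = (⟨mono (some (.node t1 t2 ts)), h⟩ : Kx K) := by
      apply Subtype.ext
      rw [bulletX_val, hfs_val]
      exact bullet_mono_list t1 t2 ts
    have hflen : 2 ≤ fs.length := by simp [hfs]
    have hmem_all : ∀ g ∈ fs, d₁ g = d₂ g := by
      intro g hg
      rw [hfs] at hg
      simp only [List.mem_cons, List.mem_map, List.mem_attach, true_and] at hg
      rcases hg with rfl | rfl | ⟨c, rfl⟩
      · exact ih1 _
      · exact ih2 _
      · exact ihr c.1 c.2 _
    have hagree : ∀ i : Fin fs.length, d₁ (fs.get i) = d₂ (fs.get i) := by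
      intro i
      apply hmem_all
      rw [List.get_eq_getElem]
      exact List.getElem_mem _
    calc d₁ ⟨mono (some (.node t1 t2 ts)), h⟩
        = d₁ (bulletX fs) := by rw [hbx]
      _ = ∑ i : Fin fs.length,
            bullet ((fs.map (fun f => f.1)).set i.1 (d₁ (fs.get i))) := h₁.leibniz fs hflen
      _ = ∑ i : Fin fs.length,
            bullet ((fs.map (fun f => f.1)).set i.1 (d₂ (fs.get i))) := by
          apply Finset.sum_congr rfl
          intro i _
          rw [hagree i]
      _ = d₂ (bulletX fs) := (h₂.leibniz fs hflen).symm
      _ = d₂ ⟨mono (some (.node t1 t2 ts)), h⟩ := by rw [hbx]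

open Classical in
lemma comp_coeff (g : PSer K) (n : ℕ) (S : PT) :
    (comp g n).1 S = if degx S = n then g.1 S else 0 := rfl

lemma UDeriv_agree_fin {d₁ d₂ : Kx K → PSer K} (h₁ : IsUDeriv d₁) (h₂ : IsUDeriv d₂)
    (f : Kx K) (hf : {S : PT | f.1.1 S ≠ 0}.Finite) : d₁ f = d₂ f := by
  classical
  set g : PT → Kx K := fun S => if hS : degy S = 0 then ⟨mono S, mono_mem_kxSub hS⟩ else 0
    with hg
  have hrep : f = ∑ S ∈ hf.toFinset, f.1.1 S • g S := by
    apply Subtype.ext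
    calc (f : PSer K) = ∑ S ∈ hf.toFinset, f.1.1 S • mono S := eq_sum_mono f.1 hf
      _ = ∑ S ∈ hf.toFinset, f.1.1 S • (g S).1 := by
          apply Finset.sum_congr rfl
          intro S hS
          rw [Set.Finite.mem_toFinset] at hS
          have hdS : degy S = 0 := f.2 S hS
          rw [hg]
          simp only
          rw [dif_pos hdS]
      _ = (↑(∑ S ∈ hf.toFinset, f.1.1 S • g S) : PSer K) := by
          rw [Submodule.coe_sum]
          apply Finset.sum_congr rfl
          intro S _
          rfl
  have hgagree : ∀ S, d₁ (g S) = d₂ (g S) := by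
    intro S
    rw [hg]
    simp only
    by_cases hS : degy S = 0
    · rw [dif_pos hS]
      rcases S with _ | t
      · have hone : (⟨mono none, mono_mem_kxSub hS⟩ : Kx K) = oneX := Subtype.ext rfl
        rw [hone, UDeriv_one h₁, UDeriv_one h₂]
      · exact UDeriv_agree_mono h₁ h₂ t _
    · rw [dif_neg hS]
      rw [show d₁ (0 : Kx K) = 0 from (IsLinearMap.mk' d₁ h₁.linear).map_zero,
        show d₂ (0 : Kx K) = 0 from (IsLinearMap.mk' d₂ h₂.linear).map_zero]
  have e₁ : d₁ (∑ S ∈ hf.toFinset, f.1.1 S • g S)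
      = ∑ S ∈ hf.toFinset, f.1.1 S • d₁ (g S) :=
    (map_sum (IsLinearMap.mk' d₁ h₁.linear) _ _).trans
      (Finset.sum_congr rfl fun S _ => (IsLinearMap.mk' d₁ h₁.linear).map_smul _ _)
  have e₂ : d₂ (∑ S ∈ hf.toFinset, f.1.1 S • g S)
      = ∑ S ∈ hf.toFinset, f.1.1 S • d₂ (g S) :=
    (map_sum (IsLinearMap.mk' d₂ h₂.linear) _ _).trans
      (Finset.sum_congr rfl fun S _ => (IsLinearMap.mk' d₂ h₂.linear).map_smul _ _)
  rw [hrep, e₁, e₂]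
  apply Finset.sum_congr rfl
  intro S _
  rw [hgagree S]

lemma UDeriv_unique {d₁ d₂ : Kx K → PSer K} (h₁ : IsUDeriv d₁) (h₂ : IsUDeriv d₂) :
    d₁ = d₂ := by
  funext f
  have htr : ∀ N : ℕ, {S : PT | (∑ n ∈ Finset.range (N + 1), compX f n).1.1 S ≠ 0}.Finite := by
    intro N
    apply Set.Finite.subset (Set.Finite.biUnion (Finset.range (N + 1)).finite_toSet
      (fun n _ => f.1.2 n))
    intro S hS
    simp only [Set.mem_setOf_eq] at hS
    have hco : (↑(∑ n ∈ Finset.range (N + 1), compX f n) : PSer K).1 S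
        = ∑ n ∈ Finset.range (N + 1), ((compX f n).1).1 S := by
      rw [Submodule.coe_sum, sum_coeff]
    rw [hco] at hS
    obtain ⟨n, hn, hne⟩ := Finset.exists_ne_zero_of_sum_ne_zero hS
    refine Set.mem_biUnion hn ?_
    rw [show ((compX f n).1).1 S = if degx S = n then f.1.1 S else 0 from rfl] at hne
    by_cases hd : degx S = n
    · rw [if_pos hd] at hne
      exact ⟨hne, hd⟩
    · rw [if_neg hd] at hne
      exact absurd rfl hne
  have hdist : ∀ N : ℕ,
      normx ((∑ n ∈ Finset.range (N + 1), compX f n).1 - f.1) ≤ (2⁻¹ : ℝ) ^ (N + 1) := by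
    intro N
    rw [normx_le_pow_iff]
    intro S hS
    rw [sub_coeff] at hS
    have hv : (↑(∑ n ∈ Finset.range (N + 1), compX f n) : PSer K).1 S
        = if degx S ≤ N then f.1.1 S else 0 := by
      rw [Submodule.coe_sum, sum_coeff]
      have hterm : ∀ n ∈ Finset.range (N + 1),
          ((compX f n).1).1 S = if n = degx S then f.1.1 S else 0 := by
        intro n _
        rw [show ((compX f n).1).1 S = if degx S = n then f.1.1 S else 0 from rfl]
        by_cases hd : degx S = n
        · rw [if_pos hd, if_pos hd.symm]
        · rw [if_neg hd, if_neg (Ne.symm hd)]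
      rw [Finset.sum_congr rfl hterm, Finset.sum_ite_eq' _ (degx S)]
      by_cases hd : degx S ≤ N
      · rw [if_pos (Finset.mem_range.2 (by omega)), if_pos hd]
      · rw [if_neg (by simp only [Finset.mem_range]; omega), if_neg hd]
    rw [hv] at hS
    by_cases hd : degx S ≤ N
    · rw [if_pos hd] at hS
      simp at hS
    · omega
  have key : ∀ ε : ℝ, 0 < ε → normx (d₁ f - d₂ f) < ε := by
    intro ε hε
    obtain ⟨δ₁, hδ₁, H₁⟩ := h₁.cont f (ε / 2) (by linarith)
    obtain ⟨δ₂, hδ₂, H₂⟩ := h₂.cont f (ε / 2) (by linarith)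
    obtain ⟨k, hk⟩ := exists_pow_lt_of_lt_one (lt_min hδ₁ hδ₂) (by norm_num : (2⁻¹ : ℝ) < 1)
    set b : Kx K := ∑ n ∈ Finset.range (k + 1), compX f n with hb
    have hbdist : distKx b f < min δ₁ δ₂ := by
      apply lt_of_le_of_lt _ hk
      apply le_trans (hdist k)
      apply pow_le_pow_of_le_one (by norm_num) (by norm_num) (by omega)
    have e1 := H₁ b (lt_of_lt_of_le hbdist (min_le_left _ _))
    have e2 := H₂ b (lt_of_lt_of_le hbdist (min_le_right _ _))
    have hbb : d₁ b = d₂ b := UDeriv_agree_fin h₁ h₂ b (htr k)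
    have tri : normx (d₁ f - d₂ f) ≤ normx (d₁ f - d₁ b) + normx (d₁ b - d₂ f) :=
      normx_sub_le_add _ _ _
    have r1 : normx (d₁ f - d₁ b) < ε / 2 := by
      rw [normx_sub_comm]
      exact e1
    have r2 : normx (d₁ b - d₂ f) < ε / 2 := by
      rw [hbb]
      exact e2
    linarith
  have h0 : normx (d₁ f - d₂ f) = 0 := by
    by_contra hne
    have hpos : 0 < normx (d₁ f - d₂ f) := lt_of_le_of_ne (normx_nonneg _) (Ne.symm hne)
    exact lt_irrefl _ (key _ hpos)
  exact sub_eq_zero.1 ((normx_eq_zero_iff _).1 h0)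

end Planar

open Planar in
/-- There exists a unique continuous `K`-linear map
`d : K{{x}} → K{{x,y}` with `d(x) = y` satisfying the Leibniz rule for every grafting
operation `•_m` (`m ≥ 2`): the universal derivation. -/
theorem planar_universal_derivation_exists_unique (K : Type) [Field K] :
    ∃! d : Kx K → PSer K, IsUDeriv d := by
  refine ⟨UD, UD_isUDeriv, ?_⟩
  intro d hd
  exact UDeriv_unique hd UD_isUDeriv
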